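/- Let λ₁ ∈ ℂ \ {0} and f, g ∈ ℂ with Δ := conj(λ₁)|f|² + λ₁|g|² ≠ 0. Define a = d = −conj(Δ)/Δ, b = −(λ₁² − conj(λ₁)²) f conj(g)/Δ, c = (λ₁² − conj(λ₁)²) conj(f) g/Δ, and let T(λ) be the 2×2 matrix with entries T(λ)₁₁ = λ + a|λ₁|²/λ, T(λ)₁₂ = b, T(λ)₂₁ = c, T(λ)₂₂ = dλ + |λ₁|²/λ. Then T(−λ₁)·(−f, g)ᵀ = (0,0)ᵀ and T(−conj(λ₁))·(conj(g), conj(f))ᵀ = (0,0)ᵀ (assuming −λ₁ and −conj(λ₁) are nonzero, which holds since λ₁ ≠ 0). -/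

import Mathlib

open Complex ComplexConjugate

noncomputable section

/-- The one-fold Darboux matrix with parameter `lam1` and coefficients `a, b, c, d`. -/
def darbouxT (lam1 a b c d : ℂ) (lam : ℂ) : Matrix (Fin 2) (Fin 2) ℂ :=
  !![lam + a * (Complex.normSq lam1 : ℂ) / lam, b;
     c, d * lam + (Complex.normSq lam1 : ℂ) / lam]

/-- The Darboux matrix with the determined coefficients annihilates the vectors
corresponding to `-lam1` and `-conj lam1`. -/
theorem darboux_kernel_neg
    (lam1 : ℂ) (hlam1 : lam1 ≠ 0) (f g : ℂ)
    (Δ : ℂ) (hΔdef : Δ = conj lam1 * (Complex.normSq f : ℂ) + lam1 * (Complex.normSq g : ℂ))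
    (hΔ : Δ ≠ 0)
    (a b c d : ℂ)
    (ha : a = -(conj Δ) / Δ)
    (hb : b = -((lam1 ^ 2 - (conj lam1) ^ 2) * f * conj g) / Δ)
    (hc : c = (lam1 ^ 2 - (conj lam1) ^ 2) * conj f * g / Δ)
    (hd : d = -(conj Δ) / Δ) :
    Matrix.mulVec (darbouxT lam1 a b c d (-lam1)) ![-f, g] = 0 ∧
    Matrix.mulVec (darbouxT lam1 a b c d (-(conj lam1))) ![conj g, conj f] = 0 := by
  have hconj : (starRingEnd ℂ) lam1 ≠ 0 := by
    simpa using hlam1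
  have hΔc : conj Δ = lam1 * (Complex.normSq f : ℂ) + conj lam1 * (Complex.normSq g : ℂ) := by
    simp [hΔdef, map_add, map_mul, Complex.conj_conj, Complex.conj_ofReal]
  have hf : (Complex.normSq f : ℂ) = f * conj f := (Complex.mul_conj f).symm
  have hg : (Complex.normSq g : ℂ) = g * conj g := (Complex.mul_conj g).symm
  have hl : (Complex.normSq lam1 : ℂ) = lam1 * conj lam1 := (Complex.mul_conj lam1).symm
  subst ha hb hc hd
  constructor
  all_goals funext i
  all_goals fin_cases i
  all_goals
    simp only [darbouxT, Matrix.mulVec, Matrix.cons_mulVec, Matrix.cons_dotProduct,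
      Matrix.dotProduct_of_isEmpty, Matrix.cons_val_zero, Matrix.cons_val_one, Matrix.head_cons,
      dotProduct, Fin.sum_univ_two, Matrix.of_apply, Pi.zero_apply, Fin.zero_eta, Fin.mk_one]
  all_goals rw [hl]
  all_goals field_simp
  all_goals rw [hΔc, hΔdef, hf, hg]
  all_goals ring_nf
  all_goals field_simp
  all_goals ring
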